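/- Let ρ₁, ρ₂, ρ₃ be complex numbers with ρ₁ + ρ₂ + ρ₃ = 0, and set κᵢ = −(1/2)Re(ρⱼ·conj(ρₖ)) for every even permutation (i,j,k) of (1,2,3), ξ = (1/4)(|ρ₁|² + |ρ₂|² + |ρ₃|²), α = (1/2)|ρ₁² + ρ₂² + ρ₃²|. Then κ₁² + κ₂² + κ₃² = (1/3)ξ² + (1/6)α². -/

import Mathlib

/-- Verification of Theorem 4 for the observer at rest: the norm of the proper
super-stress tensor equals the proper super-stress scalar,
`κ₁² + κ₂² + κ₃² = (1/3)ξ² + (1/6)α²`. -/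
theorem proper_superstress_scalar (ρ₁ ρ₂ ρ₃ : ℂ) (hsum : ρ₁ + ρ₂ + ρ₃ = 0)
    (κ₁ κ₂ κ₃ ξ α : ℝ)
    (hκ₁ : κ₁ = -(1/2) * (ρ₂ * (starRingEnd ℂ) ρ₃).re)
    (hκ₂ : κ₂ = -(1/2) * (ρ₃ * (starRingEnd ℂ) ρ₁).re)
    (hκ₃ : κ₃ = -(1/2) * (ρ₁ * (starRingEnd ℂ) ρ₂).re)
    (hξ : ξ = (1/4) * (‖ρ₁‖ ^ 2 + ‖ρ₂‖ ^ 2 + ‖ρ₃‖ ^ 2))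
    (hα : α = (1/2) * ‖ρ₁ ^ 2 + ρ₂ ^ 2 + ρ₃ ^ 2‖) :
    κ₁ ^ 2 + κ₂ ^ 2 + κ₃ ^ 2 = (1/3) * ξ ^ 2 + (1/6) * α ^ 2 := by
  have h3 : ρ₃ = -ρ₁ - ρ₂ := by linear_combination hsum
  have e : ∀ z : ℂ, ‖z‖ ^ 2 = z.re ^ 2 + z.im ^ 2 := fun z => by
    rw [Complex.sq_norm, Complex.normSq_apply]; ring
  subst h3 hκ₁ hκ₂ hκ₃ hξ hα
  simp only [mul_pow, e]
  simp only [Complex.mul_re, Complex.mul_im, Complex.add_re, Complex.add_im,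
    Complex.sub_re, Complex.sub_im, Complex.neg_re, Complex.neg_im,
    Complex.conj_re, Complex.conj_im, pow_two]
  ring
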